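/- Let $t_0 \in \mathbb{R}$, let $\Upsilon : \mathbb{R} \to \mathbb{R}$ be continuously differentiable with $\Upsilon(t) > 0$ for all $t \ge t_0$, and let $\bar{\varrho}_1 \ge 0$, $\bar{\varrho}_2 > 0$. Let $x_1, x_2 : \mathbb{R} \to \mathbb{R}$ be differentiable and $u : \mathbb{R} \to \mathbb{R}$ be continuous with $x_1'(t) = x_2(t)$ and $x_2'(t) = u(t)$ for all $t \ge t_0$ (the double integrator). Let $h_1 : \mathbb{R}^2 \to \mathbb{R}$ be twice continuously differentiable with $\partial h_1/\partial p_2 \equiv 0$ (relative degree two), set $L_f h_1(p) = \frac{\partial h_1}{\partial p_1}(p)\,p_2$ and $h_2(t,p) = \bar{\varrho}_1\,\Upsilon(t)\,h_1(p) + L_f h_1(p)$. Assume $h_1(x(t_0)) > 0$, $h_2(t_0, x(t_0)) > 0$, and that the closed loop satisfies the safety constraint $\frac{d}{dt}\big[h_2(t, x(t))\big] \ge -\bar{\varrho}_2\,\Upsilon(t)\,h_2(t, x(t))$ for all $t \ge t_0$. Then $h_1(x(t)) \ge h_1(x(t_0))\,\exp\big(-\bar{\varrho}_1 \int_{t_0}^{t}\Upsilon(s)\,ds\big)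 > 0$ for all $t \ge t_0$. -/

import Mathlib

private lemma mono_aux {a : ℝ} {y y' : ℝ → ℝ}
    (hy : ∀ t, a ≤ t → HasDerivAt y (y' t) t)
    (h' : ∀ t, a ≤ t → 0 ≤ y' t) :
    MonotoneOn y (Set.Ici a) := by
  apply monotoneOn_of_hasDerivWithinAt_nonneg (convex_Ici a)
    (fun t ht => (hy t ht).continuousAt.continuousWithinAt)
    (f' := y')
  · intro t ht
    rw [interior_Ici] at ht
    exact (hy t (le_of_lt ht)).hasDerivWithinAt
  · intro t ht
    rw [interior_Ici] at ht
    exact h' t (le_of_lt ht)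

/-- Proposition 1 (unperturbed double integrator): for the system `x₁' = x₂`, `x₂' = u`,
a relative-degree-two candidate CBF `h₁` (independent of `x₂`), a positive `C¹`
time-varying gain `Υ`, and the backstepping barrier
`h₂(t, p) = ϱ̄₁ Υ(t) h₁(p) + L_f h₁(p)` with `L_f h₁(p) = ∂₁h₁(p) p₂`, if
`h₁(x(t₀)) > 0`, `h₂(t₀, x(t₀)) > 0` and the closed loop satisfies the QP safety
constraint `(d/dt) h₂(t, x(t)) ≥ -ϱ̄₂ Υ(t) h₂(t, x(t))` for all `t ≥ t₀`, then
`h₁(x(t)) ≥ h₁(x(t₀)) exp(-ϱ̄₁ ∫_{t₀}^t Υ) > 0` for all `t ≥ t₀`. -/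
theorem double_integrator_safety (t0 : ℝ)
    (Υ : ℝ → ℝ) (hΥ : ContDiff ℝ 1 Υ) (hΥpos : ∀ t, t0 ≤ t → 0 < Υ t)
    (ϱ1 ϱ2 : ℝ) (hϱ1 : 0 ≤ ϱ1) (hϱ2 : 0 < ϱ2)
    (x1 x2 u : ℝ → ℝ) (hu : Continuous u)
    (hx1 : ∀ t, t0 ≤ t → HasDerivAt x1 (x2 t) t)
    (hx2 : ∀ t, t0 ≤ t → HasDerivAt x2 (u t) t)
    (h1 : ℝ × ℝ → ℝ) (hh1 : ContDiff ℝ 2 h1)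
    (hrel : ∀ p : ℝ × ℝ, fderiv ℝ h1 p (0, 1) = 0)
    (h2 : ℝ → ℝ × ℝ → ℝ)
    (hh2 : ∀ t p, h2 t p = ϱ1 * Υ t * h1 p + fderiv ℝ h1 p (1, 0) * p.2)
    (hinit1 : 0 < h1 (x1 t0, x2 t0))
    (hinit2 : 0 < h2 t0 (x1 t0, x2 t0))
    (hsafe : ∀ t, t0 ≤ t →
      deriv (fun s => h2 s (x1 s, x2 s)) t ≥ -ϱ2 * Υ t * h2 t (x1 t, x2 t)) :
    ∀ t, t0 ≤ t →
      h1 (x1 t, x2 t) ≥ h1 (x1 t0, x2 t0) * Real.exp (-ϱ1 * ∫ s in t0..t, Υ s) ∧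
      0 < h1 (x1 t0, x2 t0) * Real.exp (-ϱ1 * ∫ s in t0..t, Υ s) := by
  have hΥc : Continuous Υ := hΥ.continuous
  set E : ℝ → ℝ := fun t => ∫ s in t0..t, Υ s with hEdef
  have hEd : ∀ t : ℝ, HasDerivAt E (Υ t) t := fun t =>
    intervalIntegral.integral_hasDerivAt_right (hΥc.intervalIntegrable t0 t)
      (hΥc.stronglyMeasurableAtFilter _ _) hΥc.continuousAt
  have hE0 : E t0 = 0 := intervalIntegral.integral_same
  have hh1d : Differentiable ℝ h1 := hh1.differentiable (by norm_num)
  have hfC1 : ContDiff ℝ 1 (fderiv ℝ h1) := hh1.fderiv_right (by norm_num)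
  have hXd : ∀ t, t0 ≤ t → HasDerivAt (fun s => (x1 s, x2 s)) (x2 t, u t) t :=
    fun t ht => (hx1 t ht).prodMk (hx2 t ht)
  set G : ℝ → ℝ := fun t => h1 (x1 t, x2 t) with hGdef
  have hGd : ∀ t, t0 ≤ t →
      HasDerivAt G (fderiv ℝ h1 (x1 t, x2 t) (1, 0) * x2 t) t := by
    intro t ht
    have h := (hh1d (x1 t, x2 t)).hasFDerivAt.comp_hasDerivAt t (hXd t ht)
    have hval : fderiv ℝ h1 (x1 t, x2 t) (x2 t, u t)
        = fderiv ℝ h1 (x1 t, x2 t) (1, 0) * x2 t := by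
      have heq : ((x2 t, u t) : ℝ × ℝ) = x2 t • ((1:ℝ), (0:ℝ)) + u t • ((0:ℝ), (1:ℝ)) := by
        simp [Prod.ext_iff]
      rw [heq, map_add, map_smul, map_smul, hrel]
      simp [smul_eq_mul, mul_comm]
    rwa [hval] at h
  set H : ℝ → ℝ := fun t => h2 t (x1 t, x2 t) with hHdef
  have hHG : ∀ t, H t = ϱ1 * Υ t * G t + fderiv ℝ h1 (x1 t, x2 t) (1, 0) * x2 t :=
    fun t => hh2 t _
  have hHd : ∀ t, t0 ≤ t → DifferentiableAt ℝ H t := by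
    intro t ht
    rw [show H = fun s => ϱ1 * Υ s * G s + fderiv ℝ h1 (x1 s, x2 s) (1, 0) * x2 s
      from funext hHG]
    have hXd' : DifferentiableAt ℝ (fun s => (x1 s, x2 s)) t := (hXd t ht).differentiableAt
    have hDd : DifferentiableAt ℝ (fun s => fderiv ℝ h1 (x1 s, x2 s) ((1:ℝ), (0:ℝ))) t :=
      (ContinuousLinearMap.apply ℝ ℝ ((1:ℝ), (0:ℝ))).differentiable.differentiableAt.comp t
        (((hfC1.differentiable one_ne_zero) (x1 t, x2 t)).comp t hXd')
    exact (((differentiableAt_const ϱ1).mul (hΥ.differentiable one_ne_zero t)).mul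
      ((hGd t ht).differentiableAt)).add (hDd.mul (hx2 t ht).differentiableAt)
  -- Step 1: H stays positive via the first Gronwall-type argument
  set eH : ℝ → ℝ := fun t => Real.exp (ϱ2 * E t) with heHdef
  have heHd : ∀ t : ℝ, HasDerivAt eH (Real.exp (ϱ2 * E t) * (ϱ2 * Υ t)) t :=
    fun t => ((hEd t).const_mul ϱ2).exp
  have hyd : ∀ t, t0 ≤ t → HasDerivAt (fun s => H s * eH s)
      (deriv H t * eH t + H t * (Real.exp (ϱ2 * E t) * (ϱ2 * Υ t))) t :=
    fun t ht => ((hHd t ht).hasDerivAt).mul (heHd t)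
  have hy0 : ∀ t, t0 ≤ t →
      0 ≤ deriv H t * eH t + H t * (Real.exp (ϱ2 * E t) * (ϱ2 * Υ t)) := by
    intro t ht
    have hs := hsafe t ht
    have he : 0 < Real.exp (ϱ2 * E t) := Real.exp_pos _
    have : -ϱ2 * Υ t * H t ≤ deriv H t := hs
    simp only [heHdef]
    nlinarith [he]
  have hymono := mono_aux hyd hy0
  have hHpos : ∀ t, t0 ≤ t → 0 < H t := by
    intro t ht
    have h0 : H t0 * eH t0 ≤ H t * eH t := hymono (Set.self_mem_Ici) ht ht
    have he0 : eH t0 = 1 := by simp [heHdef, hE0]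
    have he : 0 < eH t := Real.exp_pos _
    have hH0 : 0 < H t0 := hinit2
    nlinarith
  -- Step 2: lower bound on G via the second Gronwall-type argument
  set eG : ℝ → ℝ := fun t => Real.exp (ϱ1 * E t) with heGdef
  have heGd : ∀ t : ℝ, HasDerivAt eG (Real.exp (ϱ1 * E t) * (ϱ1 * Υ t)) t :=
    fun t => ((hEd t).const_mul ϱ1).exp
  have hzd : ∀ t, t0 ≤ t → HasDerivAt (fun s => G s * eG s)
      (fderiv ℝ h1 (x1 t, x2 t) (1, 0) * x2 t * eG t
        + G t * (Real.exp (ϱ1 * E t) * (ϱ1 * Υ t))) t :=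
    fun t ht => (hGd t ht).mul (heGd t)
  have hz0 : ∀ t, t0 ≤ t →
      0 ≤ fderiv ℝ h1 (x1 t, x2 t) (1, 0) * x2 t * eG t
        + G t * (Real.exp (ϱ1 * E t) * (ϱ1 * Υ t)) := by
    intro t ht
    have hH := hHpos t ht
    have he : 0 < Real.exp (ϱ1 * E t) := Real.exp_pos _
    have hHeq := hHG t
    simp only [heGdef]
    nlinarith
  have hzmono := mono_aux hzd hz0
  intro t ht
  have h0 : G t0 * eG t0 ≤ G t * eG t := hzmono (Set.self_mem_Ici) ht ht
  have he0 : eG t0 = 1 := by simp [heGdef, hE0]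
  have hinv : Real.exp (-ϱ1 * E t) * Real.exp (ϱ1 * E t) = 1 := by
    rw [← Real.exp_add]; ring_nf; exact Real.exp_zero
  have hpos2 : 0 < G t0 * Real.exp (-ϱ1 * E t) :=
    mul_pos hinit1 (Real.exp_pos _)
  constructor
  · have he : 0 < Real.exp (-ϱ1 * E t) := Real.exp_pos _
    rw [he0, mul_one] at h0
    have : G t0 * Real.exp (-ϱ1 * E t) ≤ G t := by
      have := mul_le_mul_of_nonneg_right h0 he.le
      simpa only [heGdef, mul_assoc, mul_comm (Real.exp (ϱ1 * E t)), hinv, mul_one] using this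
    exact this
  · exact hpos2
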